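/- Let ω0, ω1 be positive reals, ĥ0, ĥ1 ∈ ℂ, and ι, ε reals with |ĥ1|² > ω1·(ι − ε) and ω1·ĥ0 ≠ ω0·ĥ1. Set r = √(|ĥ1|²/ω1² − (ι − ε)/ω1) and λ = −ω0/ω1 + |ω0·ĥ1 − ω1·ĥ0|/(ω1·√(|ĥ1|² − ω1·(ι − ε))), and assume λ ≥ 0. Then b* = ĥ1/ω1 + r·exp(i·arg(ω1·ĥ0 − ω0·ĥ1)) is a global minimizer of the objective b ↦ ω0·|b|² − 2·Re(conj(b)·ĥ0) over the feasible set {b ∈ ℂ : ω1·|b|² − 2·Re(conj(b)·ĥ1) + ι − ε ≤ 0}, and the constraint holds with equality at b*. -/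

import Mathlib

open Complex

lemma semifl_key (w : ℝ) (hw : w ≠ 0) (b h : ℂ) :
    w * ‖b‖ ^ 2 - 2 * ((starRingEnd ℂ b) * h).re
    = w * ‖b - h / (w:ℂ)‖ ^ 2 - ‖h‖ ^ 2 / w := by
  rw [Complex.sq_norm, Complex.sq_norm, Complex.sq_norm]
  simp [Complex.normSq_apply, Complex.mul_re, Complex.sub_re, Complex.sub_im,
    Complex.div_ofReal_re, Complex.div_ofReal_im, Complex.conj_re, Complex.conj_im]
  field_simp
  ring

/-- Lemma 3 of the paper: closed-form optimal single-antenna aggregation beamformer.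
`b* = ĥ1/ω1 + r·exp(i·arg(ω1ĥ0 − ω0ĥ1))` globally minimizes
`b ↦ ω0|b|² − 2Re(conj(b)ĥ0)` over `{b : ω1|b|² − 2Re(conj(b)ĥ1) + ι − ε ≤ 0}`,
and the constraint is active at `b*`. -/
theorem semifl_single_antenna_beamformer
    (ω0 ω1 : ℝ) (hω0 : 0 < ω0) (hω1 : 0 < ω1)
    (h0 h1 : ℂ) (ι ε : ℝ)
    (hfeas : ω1 * (ι - ε) < ‖h1‖ ^ 2)
    (hne : (ω1 : ℂ) * h0 ≠ (ω0 : ℂ) * h1)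
    (r : ℝ) (hr : r = Real.sqrt (‖h1‖ ^ 2 / ω1 ^ 2 - (ι - ε) / ω1))
    (lam : ℝ)
    (hlam : lam = -ω0 / ω1 + ‖(ω0 : ℂ) * h1 - (ω1 : ℂ) * h0‖ /
      (ω1 * Real.sqrt (‖h1‖ ^ 2 - ω1 * (ι - ε))))
    (hlam0 : 0 ≤ lam)
    (bstar : ℂ)
    (hb : bstar = h1 / (ω1 : ℂ) +
      (r : ℂ) * Complex.exp (Complex.I * ((((ω1 : ℂ) * h0 - (ω0 : ℂ) * h1).arg : ℝ) : ℂ))) :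
    (ω1 * ‖bstar‖ ^ 2 - 2 * ((starRingEnd ℂ bstar) * h1).re + ι - ε = 0) ∧
    ∀ b : ℂ, ω1 * ‖b‖ ^ 2 - 2 * ((starRingEnd ℂ b) * h1).re + ι - ε ≤ 0 →
      ω0 * ‖bstar‖ ^ 2 - 2 * ((starRingEnd ℂ bstar) * h0).re ≤
        ω0 * ‖b‖ ^ 2 - 2 * ((starRingEnd ℂ b) * h0).re := by
  have hω1c : (ω1:ℂ) ≠ 0 := Complex.ofReal_ne_zero.mpr hω1.ne'
  have hω0c : (ω0:ℂ) ≠ 0 := Complex.ofReal_ne_zero.mpr hω0.ne'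
  set z : ℂ := (ω1:ℂ) * h0 - (ω0:ℂ) * h1 with hzdef
  have hzne : z ≠ 0 := sub_ne_zero.mpr hne
  set u : ℂ := Complex.exp ((z.arg : ℂ) * Complex.I) with hudef
  have huabs : ‖u‖ = 1 := Complex.norm_exp_ofReal_mul_I _
  have hzu : (‖z‖ : ℂ) * u = z := Complex.norm_mul_exp_arg_mul_I z
  -- s
  set s := Real.sqrt (‖h1‖ ^ 2 - ω1 * (ι - ε)) with hsdef
  have hspos : 0 < s := Real.sqrt_pos.mpr (by linarith)
  have hs2 : s ^ 2 = ‖h1‖ ^ 2 - ω1 * (ι - ε) := Real.sq_sqrt (by linarith)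
  -- r
  have hrs : r = s / ω1 := by
    rw [hr, hsdef,
      show ‖h1‖ ^ 2 / ω1 ^ 2 - (ι - ε) / ω1
        = (‖h1‖ ^ 2 - ω1 * (ι - ε)) / ω1 ^ 2 by field_simp,
      Real.sqrt_div (by nlinarith), Real.sqrt_sq hω1.le]
  have hrpos : 0 < r := by rw [hrs]; positivity
  have hr2 : ω1 * r ^ 2 = ‖h1‖ ^ 2 / ω1 - (ι - ε) := by
    rw [hrs]; rw [div_pow]; rw [hs2]; field_simp
  -- |z| ≥ ω0 s
  have habsneg : ‖(ω0:ℂ) * h1 - (ω1:ℂ) * h0‖ = ‖z‖ := by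
    rw [hzdef, ← norm_neg]; ring_nf
  have hzge : ω0 * s ≤ ‖z‖ := by
    rw [hlam, habsneg, neg_div] at hlam0
    have h2 : ω0 / ω1 ≤ ‖z‖ / (ω1 * s) := by linarith
    rw [div_le_div_iff₀ hω1 (by positivity)] at h2
    nlinarith
  -- c, d, ρ
  set c : ℂ := h1 / (ω1:ℂ) with hcdef
  set d : ℂ := h0 / (ω0:ℂ) with hddef
  set ρ : ℝ := ‖z‖ / (ω0 * ω1) with hρdef
  have hρr : r ≤ ρ := by
    rw [hrs, hρdef, div_le_div_iff₀ hω1 (by positivity)]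
    nlinarith
  have hdc : d - c = (ρ : ℂ) * u := by
    have h1' : d - c = z / ((ω0:ℂ) * (ω1:ℂ)) := by
      rw [hddef, hcdef, hzdef]; field_simp
    rw [h1', ← hzu, hρdef]
    push_cast
    field_simp
  have hbc : bstar - c = (r : ℂ) * u := by
    rw [hb, hudef, mul_comm Complex.I]; ring
  have hbd : bstar - d = ((r - ρ : ℝ) : ℂ) * u := by
    have e : bstar - d = (bstar - c) - (d - c) := by ring
    rw [e, hbc, hdc]; push_cast; ring
  have habs_bd : ‖bstar - d‖ = ρ - r := by
    rw [hbd, norm_mul, huabs, Complex.norm_real, Real.norm_eq_abs, mul_one,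
      abs_of_nonpos (by linarith), neg_sub]
  have habs_bc : ‖bstar - c‖ = r := by
    rw [hbc, norm_mul, huabs, Complex.norm_real, Real.norm_eq_abs, mul_one, abs_of_pos hrpos]
  -- active constraint
  have hactive : ω1 * ‖bstar‖ ^ 2 - 2 * ((starRingEnd ℂ bstar) * h1).re + ι - ε = 0 := by
    rw [semifl_key ω1 hω1.ne' bstar h1, ← hcdef, habs_bc]
    linarith
  refine ⟨hactive, ?_⟩
  intro b hbfeas
  rw [semifl_key ω1 hω1.ne' b h1, ← hcdef] at hbfeas
  -- |b - c|² ≤ r²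
  have hdisk : ‖b - c‖ ^ 2 ≤ r ^ 2 := by
    have hh : ω1 * ‖b - c‖ ^ 2 ≤ ω1 * r ^ 2 := by linarith
    exact le_of_mul_le_mul_left hh hω1
  have hbcle : ‖b - c‖ ≤ r :=
    (pow_le_pow_iff_left₀ (norm_nonneg _) hrpos.le two_ne_zero).mp hdisk
  have htri : ‖d - c‖ ≤ ‖d - b‖ + ‖b - c‖ :=
    norm_sub_le_norm_sub_add_norm_sub d b c
  have hdcabs : ‖d - c‖ = ρ := by
    rw [hdc, norm_mul, huabs, mul_one, Complex.norm_real, Real.norm_eq_abs]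
    exact abs_of_nonneg (by positivity)
  have hdbbd : ‖d - b‖ = ‖b - d‖ := norm_sub_rev d b
  rw [semifl_key ω0 hω0.ne' bstar h0, semifl_key ω0 hω0.ne' b h0, ← hddef, habs_bd]
  have hbdge : ρ - r ≤ ‖b - d‖ := by
    rw [hdcabs, hdbbd] at htri; linarith
  have hsq : (ρ - r) ^ 2 ≤ ‖b - d‖ ^ 2 :=
    pow_le_pow_left₀ (by linarith) hbdge 2
  have := mul_le_mul_of_nonneg_left hsq hω0.le
  linarith
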